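/- Let α : ℕ → ℝ be nondecreasing with α_n ≥ 0 and α_n → ∞, and let θ ∈ Λ_1(α), with ‖θ‖_q := ∑_{j=1}^∞ |θ_j| e^{−α_j/q} for q ∈ ℕ. Then for all p, k, n ∈ ℕ (k ≥ 1): sup_{m≥n} |(R_θ^k e_n)_m| · e^{−α_m/p} ≤ e^{−α_n/(3p)} · (‖θ‖_{3pk})^k. In particular, for every p and k there is a constant M_{k,p} = (‖θ‖_{3pk})^k such that sup_m |(R_θ^k e_n)_m| e^{−α_m/p} ≤ M_{k,p} · e^{−α_n/(3p)} for all n, i.e. R_θ is topologizable on Λ_1(α) with respect to the sup-seminorms. -/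

import Mathlib

open scoped BigOperators

/-- The Rhaly map: `(R_θ x)_n = (∑_{j≤n} x_j) · θ_n` (indices starting at 0). -/
noncomputable def rhaly (θ x : ℕ → ℂ) : ℕ → ℂ :=
  fun n => (∑ j ∈ Finset.range (n + 1), x j) * θ n

/-- The `n`-th unit coordinate sequence. -/
noncomputable def unitSeq (n : ℕ) : ℕ → ℂ := fun m => if m = n then 1 else 0

/-- For `θ ∈ Λ_1(α)` the iterates of the Rhaly operator satisfy, with
respect to the sup-seminorms,
`sup_m |(R_θ^k e_n)_m| e^{-α_m/p} ≤ e^{-α_n/(3p)} · (‖θ‖_{3pk})^k`,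
i.e. `R_θ` is topologizable on `Λ_1(α)` with constants `M_{k,p} = (‖θ‖_{3pk})^k`. -/
theorem rhaly_topologizable_powerSeriesFinite
    (α : ℕ → ℝ) (hα_mono : Monotone α) (hα_nonneg : ∀ n, 0 ≤ α n)
    (hα_top : Filter.Tendsto α Filter.atTop Filter.atTop)
    (θ : ℕ → ℂ)
    (hθ : ∀ q : ℕ, 0 < q → Summable fun j => ‖θ j‖ * Real.exp (-(α j) / q))
    (p k : ℕ) (hp : 0 < p) (hk : 1 ≤ k) (n m : ℕ) :
    ‖(rhaly θ)^[k] (unitSeq n) m‖ * Real.exp (-(α m) / p)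
      ≤ Real.exp (-(α n) / (3 * p)) *
          (∑' j : ℕ, ‖θ j‖ * Real.exp (-(α j) / (3 * p * k))) ^ k := by
  set r : ℝ := 3 * (p : ℝ) * (k : ℝ) with hr_def
  have hr_pos : 0 < r := by
    have : (0:ℝ) < p := by exact_mod_cast hp
    have hk' : (0:ℝ) < k := by exact_mod_cast hk
    positivity
  set w : ℕ → ℝ := fun j => ‖θ j‖ * Real.exp (-(α j) / r) with hw_def
  have hw_nonneg : ∀ j, 0 ≤ w j := fun j => by positivity
  have hw_summ : Summable w := by
    have h := hθ (3 * p * k) (by positivity)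
    convert h using 2 with j
    simp only [hw_def, hr_def]
    push_cast
    ring_nf
  set S : ℝ := ∑' j, w j with hS_def
  have hS_nonneg : 0 ≤ S := tsum_nonneg hw_nonneg
  have hwS : ∀ j, w j ≤ S := fun j => Summable.le_tsum hw_summ j (fun _ _ => hw_nonneg _)
  -- key estimate by induction
  have key : ∀ j : ℕ, 1 ≤ j → ∀ m : ℕ,
      ‖(rhaly θ)^[j] (unitSeq n) m‖ * Real.exp (-(j : ℝ) * α m / r)
        ≤ (if n ≤ m then w m * S ^ (j - 1) else 0) := by
    intro j hj
    induction j, hj using Nat.le_induction with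
    | base =>
      intro m
      simp only [Function.iterate_one, rhaly, unitSeq]
      have hsum : (∑ l ∈ Finset.range (m + 1), (if l = n then (1:ℂ) else 0))
          = (if n ≤ m then 1 else 0) := by
        rw [Finset.sum_ite_eq' (Finset.range (m+1)) n (fun _ => (1:ℂ))]
        simp [Nat.lt_succ_iff]
      rw [hsum]
      by_cases hnm : n ≤ m
      · simp only [if_pos hnm, hw_def]
        rw [norm_mul, norm_one, one_mul, pow_zero, mul_one]
        apply le_of_eq
        congr 1
        congr 1
        push_cast
        ring
      · simp [if_neg hnm]
    | succ j hj ih =>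
      intro m
      rw [Function.iterate_succ_apply']
      simp only [rhaly]
      have hnorm_le : ‖∑ l ∈ Finset.range (m + 1), (rhaly θ)^[j] (unitSeq n) l‖
          ≤ ∑ l ∈ Finset.range (m + 1), ‖(rhaly θ)^[j] (unitSeq n) l‖ :=
        norm_sum_le _ _
      by_cases hnm : n ≤ m
      · rw [if_pos hnm]
        -- bound each term
        have hterm : ∀ l ∈ Finset.range (m + 1),
            ‖(rhaly θ)^[j] (unitSeq n) l‖ ≤ Real.exp ((j : ℝ) * α m / r) * (w l * S ^ (j-1)) := by
          intro l hl
          have hlm : l ≤ m := Nat.lt_succ_iff.mp (Finset.mem_range.mp hl)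
          have h1 := ih l
          have hexp : Real.exp (-(j : ℝ) * α l / r) > 0 := Real.exp_pos _
          have h2 : ‖(rhaly θ)^[j] (unitSeq n) l‖
              ≤ Real.exp ((j : ℝ) * α l / r) * (if n ≤ l then w l * S ^ (j-1) else 0) := by
            have := h1
            calc ‖(rhaly θ)^[j] (unitSeq n) l‖
                = Real.exp ((j : ℝ) * α l / r) *
                    (‖(rhaly θ)^[j] (unitSeq n) l‖ * Real.exp (-(j : ℝ) * α l / r)) := by
                  rw [← mul_assoc, mul_comm (Real.exp _), mul_assoc, ← Real.exp_add]
                  simp [← add_div]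
              _ ≤ Real.exp ((j : ℝ) * α l / r) * (if n ≤ l then w l * S ^ (j-1) else 0) := by
                  apply mul_le_mul_of_nonneg_left this (le_of_lt (Real.exp_pos _))
          calc ‖(rhaly θ)^[j] (unitSeq n) l‖
              ≤ Real.exp ((j : ℝ) * α l / r) * (if n ≤ l then w l * S ^ (j-1) else 0) := h2
            _ ≤ Real.exp ((j : ℝ) * α m / r) * (w l * S ^ (j-1)) := by
                apply mul_le_mul
                · apply Real.exp_le_exp.mpr
                  apply (div_le_div_iff_of_pos_right hr_pos).mpr
                  apply mul_le_mul_of_nonneg_left (hα_mono hlm) (Nat.cast_nonneg j)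
                · split
                  · exact le_refl _
                  · positivity
                · split
                  · positivity
                  · exact le_refl _
                · positivity
        have hsum_le : ∑ l ∈ Finset.range (m + 1), ‖(rhaly θ)^[j] (unitSeq n) l‖
            ≤ Real.exp ((j : ℝ) * α m / r) * (S * S ^ (j-1)) := by
          calc ∑ l ∈ Finset.range (m + 1), ‖(rhaly θ)^[j] (unitSeq n) l‖
              ≤ ∑ l ∈ Finset.range (m + 1), Real.exp ((j : ℝ) * α m / r) * (w l * S ^ (j-1)) :=
                Finset.sum_le_sum hterm
            _ = Real.exp ((j : ℝ) * α m / r) * S ^ (j-1) *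
                  ∑ l ∈ Finset.range (m + 1), w l := by
                rw [Finset.mul_sum]; apply Finset.sum_congr rfl; intro l _; ring
            _ ≤ Real.exp ((j : ℝ) * α m / r) * S ^ (j-1) * S := by
                apply mul_le_mul_of_nonneg_left _ (by positivity)
                exact Summable.sum_le_tsum (Finset.range (m+1)) (fun _ _ => hw_nonneg _) hw_summ
            _ = Real.exp ((j : ℝ) * α m / r) * (S * S ^ (j-1)) := by ring
        calc ‖(∑ l ∈ Finset.range (m + 1), (rhaly θ)^[j] (unitSeq n) l) * θ m‖ *
              Real.exp (-(↑(j+1) : ℝ) * α m / r)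
            ≤ (Real.exp ((j : ℝ) * α m / r) * (S * S ^ (j-1)) * ‖θ m‖) *
              Real.exp (-(↑(j+1) : ℝ) * α m / r) := by
              apply mul_le_mul_of_nonneg_right _ (le_of_lt (Real.exp_pos _))
              rw [norm_mul]
              exact mul_le_mul_of_nonneg_right (le_trans hnorm_le hsum_le) (norm_nonneg _)
          _ = (‖θ m‖ * (Real.exp ((j : ℝ) * α m / r) *
                Real.exp (-(↑(j+1) : ℝ) * α m / r))) * (S * S ^ (j-1)) := by ring
          _ = (‖θ m‖ * Real.exp (-(α m) / r)) * (S * S ^ (j-1)) := by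
              rw [← Real.exp_add]
              congr 2
              push_cast
              field_simp
              ring
          _ = w m * S ^ (j + 1 - 1) := by
              simp only [hw_def, Nat.add_sub_cancel]
              rw [← pow_succ', Nat.sub_add_cancel hj]
      · rw [if_neg hnm]
        have hzero : ∀ l ∈ Finset.range (m + 1), (rhaly θ)^[j] (unitSeq n) l = 0 := by
          intro l hl
          have hlm : l ≤ m := Nat.lt_succ_iff.mp (Finset.mem_range.mp hl)
          have hln : ¬ n ≤ l := fun h => hnm (le_trans h hlm)
          have h1 := ih l
          rw [if_neg hln] at h1
          have hexp : 0 < Real.exp (-(j : ℝ) * α l / r) := Real.exp_pos _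
          have : ‖(rhaly θ)^[j] (unitSeq n) l‖ ≤ 0 := by
            nlinarith [norm_nonneg ((rhaly θ)^[j] (unitSeq n) l)]
          exact norm_le_zero_iff.mp this
        rw [Finset.sum_eq_zero hzero]
        simp
  -- conclude
  have hkey := key k hk m
  by_cases hnm : n ≤ m
  · rw [if_pos hnm] at hkey
    have hαm := hα_nonneg m
    have hαn := hα_nonneg n
    have hαnm : α n ≤ α m := hα_mono hnm
    have hp' : (0:ℝ) < p := by exact_mod_cast hp
    have hk' : (0:ℝ) < k := by exact_mod_cast hk
    have hsplit : Real.exp (-(α m) / p)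
        = Real.exp (-(k : ℝ) * α m / r) * Real.exp (-(2 * α m) / (3 * p)) := by
      rw [← Real.exp_add]
      congr 1
      rw [hr_def]
      field_simp
      ring
    calc ‖(rhaly θ)^[k] (unitSeq n) m‖ * Real.exp (-(α m) / p)
        = (‖(rhaly θ)^[k] (unitSeq n) m‖ * Real.exp (-(k : ℝ) * α m / r)) *
            Real.exp (-(2 * α m) / (3 * p)) := by rw [hsplit, mul_assoc]
      _ ≤ (w m * S ^ (k - 1)) * Real.exp (-(α n) / (3 * p)) := by
          apply mul_le_mul hkey _ (le_of_lt (Real.exp_pos _)) (by positivity)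
          apply Real.exp_le_exp.mpr
          apply (div_le_div_iff_of_pos_right (by positivity : (0:ℝ) < 3 * (p:ℝ))).mpr
          linarith
      _ ≤ (S * S ^ (k - 1)) * Real.exp (-(α n) / (3 * p)) := by
          apply mul_le_mul_of_nonneg_right _ (le_of_lt (Real.exp_pos _))
          exact mul_le_mul_of_nonneg_right (hwS m) (by positivity)
      _ = Real.exp (-(α n) / (3 * p)) * S ^ k := by
          rw [← pow_succ']
          have : k - 1 + 1 = k := Nat.succ_pred_eq_of_pos hk
          rw [this]; ring
  · rw [if_neg hnm] at hkey
    have hexp : 0 < Real.exp (-(k : ℝ) * α m / r) := Real.exp_pos _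
    have h0 : ‖(rhaly θ)^[k] (unitSeq n) m‖ = 0 := by
      have : ‖(rhaly θ)^[k] (unitSeq n) m‖ ≤ 0 := by
        nlinarith [norm_nonneg ((rhaly θ)^[k] (unitSeq n) m)]
      linarith [norm_nonneg ((rhaly θ)^[k] (unitSeq n) m)]
    rw [h0, zero_mul]
    positivity
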